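/- Let l be a finite list of Boolean vectors u : Fin d → Bool, sorted in lexicographic order with coordinate 0 most significant. For each coordinate k < d, the set of positions in l at which coordinate k equals true decomposes into at most min(2^k, f_k) maximal runs of consecutive positions, where f_k is the number of vectors in l whose coordinate k equals true; in particular, for k = 0 the positions with coordinate 0 true form a single contiguous block. -/

import Mathlib

/-- Lexicographic (non-strict) order on Boolean vectors `Fin d → Bool`, with
coordinate `0` most significant (`false < true` on `Bool`). -/
def lexLe {d : ℕ} (u v : Fin d → Bool) : Prop :=
  u = v ∨ ∃ i : Fin d, (∀ j : Fin d, j < i → u j = v j) ∧ u i < v i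

/-- Number of maximal runs of consecutive `true`s in a Boolean list. -/
def trueRunCount : List Bool → ℕ
  | [] => 0
  | false :: rest => trueRunCount rest
  | [true] => 1
  | true :: b :: rest => (if b then 0 else 1) + trueRunCount (b :: rest)

lemma trc_nil : trueRunCount [] = 0 := rfl
lemma trc_false (rest : List Bool) : trueRunCount (false :: rest) = trueRunCount rest := rfl
lemma trc_single : trueRunCount [true] = 1 := rfl
lemma trc_true (b : Bool) (rest : List Bool) :
    trueRunCount (true :: b :: rest) = (if b then 0 else 1) + trueRunCount (b :: rest) := rfl

lemma trc_le_count : ∀ bs : List Bool, trueRunCount bs ≤ bs.count true := by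
  intro bs
  induction bs using trueRunCount.induct with
  | case1 => simp [trueRunCount]
  | case2 rest ih =>
      simpa [trueRunCount, List.count_cons] using ih
  | case3 => simp [trueRunCount]
  | case4 b rest ih =>
      cases b <;> simp [trueRunCount, List.count_cons] at * <;> omega

lemma two_pow_sum (n : ℕ) : ∑ j ∈ Finset.range n, 2 ^ j = 2 ^ n - 1 := by
  induction n with
  | zero => simp
  | succ n ih =>
      rw [Finset.sum_range_succ, ih]
      have : 1 ≤ 2 ^ n := Nat.one_le_two_pow
      ring_nf
      omega

def bitAt {d : ℕ} (u : Fin d → Bool) (j : ℕ) : Bool :=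
  if h : j < d then u ⟨j, h⟩ else false

def Nval {d : ℕ} (k : ℕ) (u : Fin d → Bool) : ℕ :=
  ∑ j ∈ Finset.range k, (bitAt u j).toNat * 2 ^ (k - 1 - j)

lemma Nval_le_pow {d : ℕ} (k : ℕ) (u : Fin d → Bool) : Nval k u ≤ 2 ^ k - 1 := by
  have h1 : Nval k u ≤ ∑ j ∈ Finset.range k, 2 ^ (k - 1 - j) := by
    apply Finset.sum_le_sum
    intro j _
    have : (bitAt u j).toNat ≤ 1 := Bool.toNat_le _
    nlinarith [Nat.one_le_two_pow (n := k - 1 - j)]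
  have h2 : ∑ j ∈ Finset.range k, 2 ^ (k - 1 - j) = ∑ j ∈ Finset.range k, 2 ^ j :=
    Finset.sum_range_reflect (fun j => 2 ^ j) k
  rw [h2, two_pow_sum] at h1
  exact h1

lemma tail_sum (i : ℕ) : ∀ n : ℕ, ∑ j ∈ Finset.Ico (i + 1) (i + 1 + n), 2 ^ (i + n - j) = 2 ^ n - 1 := by
  intro n
  induction n with
  | zero => simp
  | succ n ih =>
      have hle : i + 1 ≤ i + 1 + n := by omega
      rw [show i + 1 + (n + 1) = (i + 1 + n) + 1 by omega,
        Finset.sum_Ico_succ_top hle]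
      have hcongr : ∑ j ∈ Finset.Ico (i + 1) (i + 1 + n), 2 ^ (i + (n + 1) - j)
          = ∑ j ∈ Finset.Ico (i + 1) (i + 1 + n), 2 * 2 ^ (i + n - j) := by
        apply Finset.sum_congr rfl
        intro j hj
        simp only [Finset.mem_Ico] at hj
        rw [show i + (n + 1) - j = (i + n - j) + 1 by omega, pow_succ]
        ring
      rw [hcongr, ← Finset.mul_sum, ih]
      have : 1 ≤ 2 ^ n := Nat.one_le_two_pow
      have h2 : i + (n + 1) - (i + 1 + n) = 0 := by omega
      rw [h2, pow_succ]
      simp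
      omega

lemma Nval_strict {d : ℕ} {u v : Fin d → Bool} {k : ℕ} (i : Fin d) (hik : (i : ℕ) < k)
    (hagree : ∀ j : Fin d, j < i → u j = v j) (hu : u i = false) (hv : v i = true) :
    Nval k u < Nval k v := by
  have hbit : ∀ j : ℕ, j < (i : ℕ) → bitAt u j = bitAt v j := by
    intro j hj
    unfold bitAt
    split
    · exact hagree ⟨j, by assumption⟩ (by simpa [Fin.lt_def] using hj)
    · rfl
  have hsplit : ∀ w : Fin d → Bool, Nval k w =
      (∑ j ∈ Finset.range (i : ℕ), (bitAt w j).toNat * 2 ^ (k - 1 - j))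
      + (bitAt w (i : ℕ)).toNat * 2 ^ (k - 1 - (i : ℕ))
      + ∑ j ∈ Finset.Ico ((i : ℕ) + 1) k, (bitAt w j).toNat * 2 ^ (k - 1 - j) := by
    intro w
    unfold Nval
    have h1 : Finset.range k = Finset.range ((i : ℕ) + 1) ∪ Finset.Ico ((i : ℕ) + 1) k := by
      ext x
      simp only [Finset.mem_range, Finset.mem_union, Finset.mem_Ico]
      omega
    have h2 : Disjoint (Finset.range ((i : ℕ) + 1)) (Finset.Ico ((i : ℕ) + 1) k) := by
      simp only [Finset.disjoint_left, Finset.mem_range, Finset.mem_Ico]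
      omega
    rw [h1, Finset.sum_union h2, Finset.sum_range_succ]
  have hbu : bitAt u (i : ℕ) = false := by simp [bitAt, Fin.is_lt, hu]
  have hbv : bitAt v (i : ℕ) = true := by simp [bitAt, Fin.is_lt, hv]
  have hpre : ∑ j ∈ Finset.range (i : ℕ), (bitAt u j).toNat * 2 ^ (k - 1 - j)
      = ∑ j ∈ Finset.range (i : ℕ), (bitAt v j).toNat * 2 ^ (k - 1 - j) := by
    apply Finset.sum_congr rfl
    intro j hj
    rw [hbit j (Finset.mem_range.mp hj)]
  have htail : ∑ j ∈ Finset.Ico ((i : ℕ) + 1) k, (bitAt u j).toNat * 2 ^ (k - 1 - j)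
      ≤ 2 ^ (k - 1 - (i : ℕ)) - 1 := by
    have hb : ∑ j ∈ Finset.Ico ((i : ℕ) + 1) k, (bitAt u j).toNat * 2 ^ (k - 1 - j)
        ≤ ∑ j ∈ Finset.Ico ((i : ℕ) + 1) k, 2 ^ (k - 1 - j) := by
      apply Finset.sum_le_sum
      intro j _
      have : (bitAt u j).toNat ≤ 1 := Bool.toNat_le _
      nlinarith [Nat.one_le_two_pow (n := k - 1 - j)]
    have heq : ∑ j ∈ Finset.Ico ((i : ℕ) + 1) k, 2 ^ (k - 1 - j)
        = 2 ^ (k - 1 - (i : ℕ)) - 1 := by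
      have := tail_sum (i : ℕ) (k - 1 - (i : ℕ))
      rw [show (i : ℕ) + 1 + (k - 1 - (i : ℕ)) = k by omega] at this
      rw [← this]
      apply Finset.sum_congr rfl
      intro j hj
      simp only [Finset.mem_Ico] at hj
      congr 1
      omega
    omega
  have h2 : 1 ≤ 2 ^ (k - 1 - (i : ℕ)) := Nat.one_le_two_pow
  rw [hsplit u, hsplit v, hbu, hbv, hpre]
  simp only [Bool.toNat_false, Bool.toNat_true, zero_mul, one_mul]
  omega

lemma Nval_mono {d : ℕ} {u v : Fin d → Bool} {k : ℕ} (hkd : k ≤ d) (h : lexLe u v) :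
    Nval k u ≤ Nval k v := by
  rcases h with rfl | ⟨i, hagree, hlt⟩
  · exact le_rfl
  obtain ⟨hu, hv⟩ := Bool.lt_iff.mp hlt
  by_cases hik : (i : ℕ) < k
  · exact le_of_lt (Nval_strict i hik hagree hu hv)
  · -- u and v agree on all coordinates below k
    have : Nval k u = Nval k v := by
      unfold Nval
      apply Finset.sum_congr rfl
      intro j hj
      have hjk : j < k := Finset.mem_range.mp hj
      have hjd : j < d := lt_of_lt_of_le hjk hkd
      have : bitAt u j = bitAt v j := by
        simp only [bitAt, dif_pos hjd]
        exact hagree ⟨j, hjd⟩ (by simp [Fin.lt_def]; omega)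
      rw [this]
    omega

lemma Nval_strict_k {d : ℕ} {u v : Fin d → Bool} {k : Fin d} (h : lexLe u v)
    (hu : u k = true) (hv : v k = false) : Nval (k : ℕ) u < Nval (k : ℕ) v := by
  rcases h with rfl | ⟨i, hagree, hlt⟩
  · rw [hu] at hv; exact absurd hv (by simp)
  obtain ⟨hui, hvi⟩ := Bool.lt_iff.mp hlt
  rcases lt_trichotomy i k with hik | hik | hik
  · exact Nval_strict i (by exact hik) hagree hui hvi
  · subst hik; rw [hu] at hui; exact absurd hui (by simp)
  · have := hagree k hik
    rw [hu, hv] at this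
    exact absurd this (by simp)

lemma chain_runs {d : ℕ} (k : Fin d) : ∀ (rest : List (Fin d → Bool)) (u : Fin d → Bool),
    List.Chain lexLe u rest →
    trueRunCount (List.map (fun w => w k) (u :: rest)) + Nval (k : ℕ) u
      ≤ Nval (k : ℕ) ((u :: rest).getLast (List.cons_ne_nil _ _)) + 1 := by
  intro rest
  induction rest with
  | nil =>
      intro u _
      cases h : u k <;> simp [trueRunCount, h] <;> omega
  | cons v rest ih =>
      intro u hchain
      replace hchain := List.isChain_cons_cons.mp hchain
      obtain ⟨huv, hch⟩ := hchain
      have IH := ih v hch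
      have hlast : (u :: v :: rest).getLast (List.cons_ne_nil _ _)
          = (v :: rest).getLast (List.cons_ne_nil _ _) := by
        rw [List.getLast_cons]
      rw [hlast]
      have hkd : (k : ℕ) ≤ d := le_of_lt k.isLt
      cases hu : u k <;> cases hv : v k
      · have hm := Nval_mono hkd huv
        simp only [List.map_cons, hu, hv, trc_false, trc_true, reduceIte] at IH ⊢
        linarith
      · have hm := Nval_mono hkd huv
        simp only [List.map_cons, hu, hv, trc_false, trc_true, reduceIte] at IH ⊢
        linarith
      · have hs := Nval_strict_k huv hu hv
        simp only [List.map_cons, hu, hv, trc_false, trc_true, Bool.false_eq_true, if_false] at IH ⊢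
        linarith
      · have hm := Nval_mono hkd huv
        simp only [List.map_cons, hu, hv, trc_false, trc_true, reduceIte] at IH ⊢
        linarith

/-- In a list of Boolean vectors sorted lexicographically with coordinate `0`
most significant, for each coordinate `k` the positions where coordinate `k`
is `true` form at most `min (2^k) f_k` maximal runs of consecutive positions,
where `f_k` is the number of vectors whose coordinate `k` is `true`; in
particular, for `k = 0` they form a single contiguous block. -/
theorem radix_sorted_true_runs {d : ℕ} (l : List (Fin d → Bool))
    (hl : l.Pairwise lexLe) (k : Fin d) :
    trueRunCount (l.map (fun u => u k)) ≤
      min (2 ^ (k : ℕ)) ((l.map (fun u => u k)).count true) ∧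
    ((k : ℕ) = 0 → trueRunCount (l.map (fun u => u k)) ≤ 1) := by
  have main : trueRunCount (l.map (fun u => u k)) ≤
      min (2 ^ (k : ℕ)) ((l.map (fun u => u k)).count true) := by
    refine le_min ?_ (trc_le_count _)
    cases l with
    | nil => simp [trc_nil]
    | cons u rest =>
        have hc : List.Chain lexLe u rest := hl.isChain
        have H := chain_runs k rest u hc
        have hN := Nval_le_pow (d := d) (k : ℕ) ((u :: rest).getLast (List.cons_ne_nil _ _))
        have h1 : 1 ≤ 2 ^ (k : ℕ) := Nat.one_le_two_pow
        have h2 : 2 ^ (k : ℕ) - 1 + 1 = 2 ^ (k : ℕ) := Nat.sub_add_cancel h1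
        linarith
  refine ⟨main, fun hk => ?_⟩
  calc trueRunCount (l.map (fun u => u k))
      ≤ min (2 ^ (k : ℕ)) ((l.map (fun u => u k)).count true) := main
    _ ≤ 2 ^ (k : ℕ) := min_le_left _ _
    _ = 1 := by rw [hk, pow_zero]
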